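/- Let G = (V,E) be an undirected graph such that the all-1/2 assignment (x_v = 1/2 for all v) is the unique optimal fractional solution of the vertex cover LP of G, and let u ∈ V be a vertex contained in some minimum (integral) vertex cover of G. Then the minimum integral vertex cover size of G − u is one less than that of G, while the optimal fractional vertex cover LP value of G − u is exactly 1/2 less than that of G. Hence the integrality excess (integral optimum minus fractional optimum) of G − u equals that of G minus 1/2. -/

import Mathlib

open Finset

/-- `G` with the vertex `u` removed (kept as an isolated vertex, which affects
neither vertex covers nor optimal LP values beyond the harmless variable `x_u`). -/
def delVert {V : Type} (G : SimpleGraph V) (u : V) : SimpleGraph V where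
  Adj a b := G.Adj a b ∧ a ≠ u ∧ b ≠ u
  symm := by
    constructor; rintro a b ⟨h, ha, hb⟩; exact ⟨h.symm, hb, ha⟩
  loopless := by
    constructor; rintro a ⟨h, _, _⟩; exact G.irrefl h

def BadSet {V : Type} [Fintype V] [DecidableEq V] (y : V → ℚ) : Finset V :=
  Finset.univ.filter (fun v => ¬(y v = 0 ∨ y v = 1/2 ∨ y v = 1))

lemma step_lemma {V : Type} [Fintype V] [DecidableEq V] (H : SimpleGraph V) (y : V → ℚ)
    (hb : ∀ v, 0 ≤ y v ∧ y v ≤ 1) (he : ∀ a b, H.Adj a b → 1 ≤ y a + y b)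
    (hne : (BadSet y).Nonempty) :
    ∃ z : V → ℚ, (∀ v, 0 ≤ z v ∧ z v ≤ 1) ∧ (∀ a b, H.Adj a b → 1 ≤ z a + z b) ∧
      (∑ v, z v ≤ ∑ v, y v) ∧ (BadSet z).card < (BadSet y).card := by
  set Sp := Finset.univ.filter (fun v => 1/2 < y v ∧ y v < 1) with hSpdef
  set Sm := Finset.univ.filter (fun v => 0 < y v ∧ y v < 1/2) with hSmdef
  have hSp : ∀ v, v ∈ Sp ↔ (1/2 < y v ∧ y v < 1) := by
    intro v; simp [hSpdef]
  have hSm : ∀ v, v ∈ Sm ↔ (0 < y v ∧ y v < 1/2) := by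
    intro v; simp [hSmdef]
  have hdis : ∀ v, v ∈ Sp → v ∈ Sm → False := by
    intro v h1 h2
    have a1 := (hSp v).1 h1
    have a2 := (hSm v).1 h2
    linarith [a1.1, a2.2]
  have hBad : BadSet y = Sp ∪ Sm := by
    ext v
    obtain ⟨h0, h1⟩ := hb v
    simp only [BadSet, mem_filter, mem_univ, true_and, mem_union, hSp, hSm]
    constructor
    · intro h
      push_neg at h
      obtain ⟨e0, eh, e1⟩ := h
      rcases lt_trichotomy (y v) (1/2) with h2 | h2 | h2
      · exact Or.inr ⟨lt_of_le_of_ne h0 (Ne.symm e0), h2⟩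
      · exact absurd h2 eh
      · exact Or.inl ⟨h2, lt_of_le_of_ne h1 e1⟩
    · rintro (⟨ha2, hb2⟩ | ⟨ha2, hb2⟩) (h | h | h) <;> linarith
  have hBadmem : ∀ (w : V → ℚ) v, v ∈ BadSet w ↔ ¬(w v = 0 ∨ w v = 1/2 ∨ w v = 1) := by
    intro w v; simp [BadSet]
  rcases le_or_gt Sp.card Sm.card with hc | hc
  · -- shift S+ up, S- down by ε
    have hSmne : Sm.Nonempty := by
      rcases Sm.eq_empty_or_nonempty with h | h
      · exfalso
        have h2 : Sp = ∅ := by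
          have := h ▸ hc
          simpa [Finset.card_eq_zero] using this
        obtain ⟨v, hv⟩ := hne
        rw [hBad, h, h2] at hv
        simp at hv
      · exact h
    have hTne : (Sp ∪ Sm).Nonempty := hSmne.mono Finset.subset_union_right
    set f : V → ℚ := fun v => if v ∈ Sp then 1 - y v else y v with hf
    set ε := (Sp ∪ Sm).inf' hTne f with hε
    have hεpos : 0 < ε := by
      rw [hε, Finset.lt_inf'_iff]
      intro v hv
      by_cases hvp : v ∈ Sp
      · have := (hSp v).1 hvp; simp only [hf, if_pos hvp]; linarith [this.2]
      · have hvm : v ∈ Sm := (Finset.mem_union.1 hv).resolve_left hvp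
        have := (hSm v).1 hvm; simp only [hf, if_neg hvp]; linarith [this.1]
    have hεSp : ∀ v ∈ Sp, ε ≤ 1 - y v := by
      intro v hv
      have h2 : ε ≤ if v ∈ Sp then 1 - y v else y v := Finset.inf'_le f (Finset.mem_union_left Sm hv)
      rwa [if_pos hv] at h2
    have hεSm : ∀ v ∈ Sm, ε ≤ y v := by
      intro v hv
      have hvp : v ∉ Sp := fun h => hdis v h hv
      have h2 : ε ≤ if v ∈ Sp then 1 - y v else y v := Finset.inf'_le f (Finset.mem_union_right Sp hv)
      rwa [if_neg hvp] at h2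
    set z : V → ℚ := fun v => if v ∈ Sp then y v + ε else if v ∈ Sm then y v - ε else y v with hz
    have hzSp : ∀ v ∈ Sp, z v = y v + ε := by intro v hv; simp [hz, if_pos hv]
    have hzSm : ∀ v ∈ Sm, z v = y v - ε := by
      intro v hv
      have hvp : v ∉ Sp := fun h => hdis v h hv
      simp [hz, if_neg hvp, if_pos hv]
    have hzfix : ∀ v, v ∉ Sp → v ∉ Sm → z v = y v := by
      intro v h1 h2; simp [hz, if_neg h1, if_neg h2]
    have hzge : ∀ v, v ∉ Sm → y v ≤ z v := by
      intro v hv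
      by_cases hp : v ∈ Sp
      · rw [hzSp v hp]; linarith
      · rw [hzfix v hp hv]
    refine ⟨z, ?_, ?_, ?_, ?_⟩
    · intro v
      by_cases hp : v ∈ Sp
      · rw [hzSp v hp]
        have h1 := (hSp v).1 hp
        constructor
        · linarith [(hb v).1]
        · linarith [hεSp v hp]
      · by_cases hm : v ∈ Sm
        · rw [hzSm v hm]
          constructor
          · linarith [hεSm v hm]
          · linarith [(hb v).2]
        · rw [hzfix v hp hm]; exact hb v
    · intro a b hadj
      have h1 := he a b hadj
      by_cases ham : a ∈ Sm
      · have ha2 := (hSm a).1 ham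
        have hap : a ∉ Sp := fun h => hdis a h ham
        by_cases hbm : b ∈ Sm
        · exact absurd h1 (by have := (hSm b).1 hbm; push_neg; linarith [ha2.2, this.2])
        · by_cases hbp : b ∈ Sp
          · rw [hzSm a ham, hzSp b hbp]; linarith
          · have hyb : 1 ≤ y b := by
              by_contra hlt
              push_neg at hlt
              exact hbp ((hSp b).2 ⟨by linarith [ha2.2], hlt⟩)
            rw [hzSm a ham, hzfix b hbp hbm]
            linarith [hεSm a ham]
      · by_cases hbm : b ∈ Sm
        · have hb2 := (hSm b).1 hbm
          by_cases hap : a ∈ Sp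
          · rw [hzSm b hbm, hzSp a hap]; linarith
          · have hya : 1 ≤ y a := by
              by_contra hlt
              push_neg at hlt
              exact hap ((hSp a).2 ⟨by linarith [hb2.2], hlt⟩)
            rw [hzSm b hbm, hzfix a hap ham]
            linarith [hεSm b hbm]
        · linarith [hzge a ham, hzge b hbm]
    · -- sum
      have hpt : ∀ v, z v = y v + ((if v ∈ Sp then ε else 0) - (if v ∈ Sm then ε else 0)) := by
        intro v
        by_cases hp : v ∈ Sp
        · have hm : v ∉ Sm := fun h => hdis v hp h
          rw [hzSp v hp, if_pos hp, if_neg hm]; ring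
        · by_cases hm : v ∈ Sm
          · rw [hzSm v hm, if_neg hp, if_pos hm]; ring
          · rw [hzfix v hp hm, if_neg hp, if_neg hm]; ring
      have hsum : ∑ v, z v = ∑ v, y v + ((Sp.card : ℚ) * ε - (Sm.card : ℚ) * ε) := by
        rw [Finset.sum_congr rfl (fun v _ => hpt v), Finset.sum_add_distrib,
          Finset.sum_sub_distrib, Finset.sum_ite_mem, Finset.sum_ite_mem,
          Finset.univ_inter, Finset.univ_inter, Finset.sum_const, Finset.sum_const,
          nsmul_eq_mul, nsmul_eq_mul]
      rw [hsum]
      have hcc : (Sp.card : ℚ) ≤ (Sm.card : ℚ) := by exact_mod_cast hc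
      nlinarith
    · -- card decreases
      obtain ⟨v₀, hv₀T, hv₀f⟩ := Finset.exists_mem_eq_inf' hTne f
      have hv₀good : z v₀ = 0 ∨ z v₀ = 1/2 ∨ z v₀ = 1 := by
        by_cases hp : v₀ ∈ Sp
        · right; right
          have hfv : f v₀ = 1 - y v₀ := by
            show (if v₀ ∈ Sp then 1 - y v₀ else y v₀) = 1 - y v₀
            rw [if_pos hp]
          rw [hzSp v₀ hp, hε, hv₀f, hfv]; ring
        · left
          have hm : v₀ ∈ Sm := (Finset.mem_union.1 hv₀T).resolve_left hp
          have hfv : f v₀ = y v₀ := by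
            show (if v₀ ∈ Sp then 1 - y v₀ else y v₀) = y v₀
            rw [if_neg hp]
          rw [hzSm v₀ hm, hε, hv₀f, hfv]; ring
      have hsub : BadSet z ⊆ BadSet y := by
        intro v hv
        rw [hBadmem] at hv
        by_contra hnv
        have hnp : v ∉ Sp := fun h => hnv (hBad ▸ Finset.mem_union_left _ h)
        have hnm : v ∉ Sm := fun h => hnv (hBad ▸ Finset.mem_union_right _ h)
        have hvb : v ∉ BadSet y := hnv
        rw [hBadmem, not_not] at hvb
        rw [hzfix v hnp hnm] at hv
        exact hv hvb
      have hv₀in : v₀ ∈ BadSet y := by rw [hBad]; exact hv₀T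
      have hv₀out : v₀ ∉ BadSet z := by
        rw [hBadmem, not_not]; exact hv₀good
      exact Finset.card_lt_card ((Finset.ssubset_iff_of_subset hsub).2 ⟨v₀, hv₀in, hv₀out⟩)
  · -- shift S+ down, S- up by ε
    have hSpne : Sp.Nonempty := by
      rw [← Finset.card_pos]; omega
    have hTne : (Sp ∪ Sm).Nonempty := hSpne.mono Finset.subset_union_left
    set f : V → ℚ := fun v => if v ∈ Sp then y v - 1/2 else 1/2 - y v with hf
    set ε := (Sp ∪ Sm).inf' hTne f with hε
    have hεpos : 0 < ε := by
      rw [hε, Finset.lt_inf'_iff]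
      intro v hv
      by_cases hvp : v ∈ Sp
      · have := (hSp v).1 hvp; simp only [hf, if_pos hvp]; linarith [this.1]
      · have hvm : v ∈ Sm := (Finset.mem_union.1 hv).resolve_left hvp
        have := (hSm v).1 hvm; simp only [hf, if_neg hvp]; linarith [this.2]
    have hεSp : ∀ v ∈ Sp, ε ≤ y v - 1/2 := by
      intro v hv
      have h2 : ε ≤ if v ∈ Sp then y v - 1/2 else 1/2 - y v := Finset.inf'_le f (Finset.mem_union_left Sm hv)
      rwa [if_pos hv] at h2
    have hεSm : ∀ v ∈ Sm, ε ≤ 1/2 - y v := by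
      intro v hv
      have hvp : v ∉ Sp := fun h => hdis v h hv
      have h2 : ε ≤ if v ∈ Sp then y v - 1/2 else 1/2 - y v := Finset.inf'_le f (Finset.mem_union_right Sp hv)
      rwa [if_neg hvp] at h2
    set z : V → ℚ := fun v => if v ∈ Sp then y v - ε else if v ∈ Sm then y v + ε else y v with hz
    have hzSp : ∀ v ∈ Sp, z v = y v - ε := by intro v hv; simp [hz, if_pos hv]
    have hzSm : ∀ v ∈ Sm, z v = y v + ε := by
      intro v hv
      have hvp : v ∉ Sp := fun h => hdis v h hv
      simp [hz, if_neg hvp, if_pos hv]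
    have hzfix : ∀ v, v ∉ Sp → v ∉ Sm → z v = y v := by
      intro v h1 h2; simp [hz, if_neg h1, if_neg h2]
    have hzge : ∀ v, v ∉ Sp → y v ≤ z v := by
      intro v hv
      by_cases hm : v ∈ Sm
      · rw [hzSm v hm]; linarith
      · rw [hzfix v hv hm]
    have hzhalf : ∀ v ∈ Sp, 1/2 ≤ z v := by
      intro v hv; rw [hzSp v hv]; linarith [hεSp v hv]
    refine ⟨z, ?_, ?_, ?_, ?_⟩
    · intro v
      by_cases hp : v ∈ Sp
      · rw [hzSp v hp]
        constructor
        · linarith [hεSp v hp]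
        · linarith [(hb v).2, hεpos]
      · by_cases hm : v ∈ Sm
        · rw [hzSm v hm]
          constructor
          · linarith [(hb v).1, hεpos]
          · linarith [hεSm v hm]
        · rw [hzfix v hp hm]; exact hb v
    · intro a b hadj
      have h1 := he a b hadj
      by_cases hap : a ∈ Sp
      · have ha2 := (hSp a).1 hap
        by_cases hbp : b ∈ Sp
        · linarith [hzhalf a hap, hzhalf b hbp]
        · by_cases hbm : b ∈ Sm
          · rw [hzSp a hap, hzSm b hbm]; linarith
          · have hyb : 1/2 ≤ y b := by
              by_contra hlt
              push_neg at hlt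
              exact hbm ((hSm b).2 ⟨by linarith [ha2.2], hlt⟩)
            rw [hzfix b hbp hbm]
            linarith [hzhalf a hap]
      · by_cases hbp : b ∈ Sp
        · have hb2 := (hSp b).1 hbp
          by_cases ham : a ∈ Sm
          · rw [hzSp b hbp, hzSm a ham]; linarith
          · have hya : 1/2 ≤ y a := by
              by_contra hlt
              push_neg at hlt
              exact ham ((hSm a).2 ⟨by linarith [hb2.2], hlt⟩)
            rw [hzfix a hap ham]
            linarith [hzhalf b hbp]
        · linarith [hzge a hap, hzge b hbp]
    · -- sum
      have hpt : ∀ v, z v = y v + ((if v ∈ Sm then ε else 0) - (if v ∈ Sp then ε else 0)) := by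
        intro v
        by_cases hp : v ∈ Sp
        · have hm : v ∉ Sm := fun h => hdis v hp h
          rw [hzSp v hp, if_pos hp, if_neg hm]; ring
        · by_cases hm : v ∈ Sm
          · rw [hzSm v hm, if_neg hp, if_pos hm]; ring
          · rw [hzfix v hp hm, if_neg hp, if_neg hm]; ring
      have hsum : ∑ v, z v = ∑ v, y v + ((Sm.card : ℚ) * ε - (Sp.card : ℚ) * ε) := by
        rw [Finset.sum_congr rfl (fun v _ => hpt v), Finset.sum_add_distrib,
          Finset.sum_sub_distrib, Finset.sum_ite_mem, Finset.sum_ite_mem,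
          Finset.univ_inter, Finset.univ_inter, Finset.sum_const, Finset.sum_const,
          nsmul_eq_mul, nsmul_eq_mul]
      rw [hsum]
      have hcc : (Sm.card : ℚ) ≤ (Sp.card : ℚ) := by exact_mod_cast hc.le
      nlinarith
    · -- card decreases
      obtain ⟨v₀, hv₀T, hv₀f⟩ := Finset.exists_mem_eq_inf' hTne f
      have hv₀good : z v₀ = 0 ∨ z v₀ = 1/2 ∨ z v₀ = 1 := by
        right; left
        by_cases hp : v₀ ∈ Sp
        · have hfv : f v₀ = y v₀ - 1/2 := by
            show (if v₀ ∈ Sp then y v₀ - 1/2 else 1/2 - y v₀) = y v₀ - 1/2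
            rw [if_pos hp]
          rw [hzSp v₀ hp, hε, hv₀f, hfv]; ring
        · have hm : v₀ ∈ Sm := (Finset.mem_union.1 hv₀T).resolve_left hp
          have hfv : f v₀ = 1/2 - y v₀ := by
            show (if v₀ ∈ Sp then y v₀ - 1/2 else 1/2 - y v₀) = 1/2 - y v₀
            rw [if_neg hp]
          rw [hzSm v₀ hm, hε, hv₀f, hfv]; ring
      have hsub : BadSet z ⊆ BadSet y := by
        intro v hv
        rw [hBadmem] at hv
        by_contra hnv
        have hnp : v ∉ Sp := fun h => hnv (hBad ▸ Finset.mem_union_left _ h)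
        have hnm : v ∉ Sm := fun h => hnv (hBad ▸ Finset.mem_union_right _ h)
        have hvb : v ∉ BadSet y := hnv
        rw [hBadmem, not_not] at hvb
        rw [hzfix v hnp hnm] at hv
        exact hv hvb
      have hv₀in : v₀ ∈ BadSet y := by rw [hBad]; exact hv₀T
      have hv₀out : v₀ ∉ BadSet z := by
        rw [hBadmem, not_not]; exact hv₀good
      exact Finset.card_lt_card ((Finset.ssubset_iff_of_subset hsub).2 ⟨v₀, hv₀in, hv₀out⟩)

lemma round_lemma {V : Type} [Fintype V] [DecidableEq V] (H : SimpleGraph V) :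
    ∀ (k : ℕ) (y : V → ℚ), (BadSet y).card ≤ k →
    (∀ v, 0 ≤ y v ∧ y v ≤ 1) → (∀ a b, H.Adj a b → 1 ≤ y a + y b) →
    ∃ z : V → ℚ, (∀ v, z v = 0 ∨ z v = 1/2 ∨ z v = 1) ∧
      (∀ v, 0 ≤ z v ∧ z v ≤ 1) ∧ (∀ a b, H.Adj a b → 1 ≤ z a + z b) ∧
      ∑ v, z v ≤ ∑ v, y v := by
  intro k
  induction k with
  | zero =>
    intro y hk hb he
    refine ⟨y, fun v => ?_, hb, he, le_rfl⟩
    by_contra hv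
    have : v ∈ BadSet y := Finset.mem_filter.2 ⟨Finset.mem_univ v, hv⟩
    have : (BadSet y).Nonempty := ⟨v, this⟩
    have := Finset.card_pos.2 this
    omega
  | succ k ih =>
    intro y hk hb he
    rcases (BadSet y).eq_empty_or_nonempty with hemp | hne
    · refine ⟨y, fun v => ?_, hb, he, le_rfl⟩
      by_contra hv
      have : v ∈ BadSet y := Finset.mem_filter.2 ⟨Finset.mem_univ v, hv⟩
      rw [hemp] at this
      simp at this
    · obtain ⟨z₁, hb₁, he₁, hs₁, hcard₁⟩ := step_lemma H y hb he hne
      obtain ⟨z, hspec, hbz, hez, hsz⟩ := ih z₁ (by omega) hb₁ he₁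
      exact ⟨z, hspec, hbz, hez, le_trans hsz hs₁⟩

/-- If the all-1/2 assignment is the unique optimal fractional
solution of the vertex cover LP of `G` (so every other feasible solution has value
strictly above `|V|/2`), and `u` lies in some minimum integral vertex cover, then
the minimum vertex cover size of `G - u` is one less than that of `G`, and the
optimal fractional vertex-cover-LP value of `G - u` is `|V|/2 - 1/2`. -/
theorem branching_reduces_integrality_excess {V : Type} [Fintype V] [DecidableEq V]
    (G : SimpleGraph V) (u : V)
    (huniq : ∀ x : V → ℚ,
      ((∀ v, 0 ≤ x v ∧ x v ≤ 1) ∧ ∀ a b, G.Adj a b → 1 ≤ x a + x b) →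
      x ≠ (fun _ => 1/2) → (Fintype.card V : ℚ) / 2 < ∑ v, x v)
    (hmem : ∃ Cmin : Finset V,
      (∀ a b, G.Adj a b → a ∈ Cmin ∨ b ∈ Cmin) ∧
      (∀ D : Finset V, (∀ a b, G.Adj a b → a ∈ D ∨ b ∈ D) → Cmin.card ≤ D.card) ∧
      u ∈ Cmin) :
    (sInf {n | ∃ C : Finset V,
        (∀ a b, (delVert G u).Adj a b → a ∈ C ∨ b ∈ C) ∧ C.card = n} + 1 =
      sInf {n | ∃ C : Finset V,
        (∀ a b, G.Adj a b → a ∈ C ∨ b ∈ C) ∧ C.card = n}) ∧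
    (∃ x : V → ℚ,
      ((∀ v, 0 ≤ x v ∧ x v ≤ 1) ∧
        ∀ a b, (delVert G u).Adj a b → 1 ≤ x a + x b) ∧
      (∀ y : V → ℚ,
        ((∀ v, 0 ≤ y v ∧ y v ≤ 1) ∧
          ∀ a b, (delVert G u).Adj a b → 1 ≤ y a + y b) →
        ∑ v, x v ≤ ∑ v, y v) ∧
      ∑ v, x v = (Fintype.card V : ℚ) / 2 - 1/2) := by
  classical
  obtain ⟨Cmin, hcov, hmin, huC⟩ := hmem
  constructor
  · -- integral part
    have hBval : sInf {n | ∃ C : Finset V,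
        (∀ a b, G.Adj a b → a ∈ C ∨ b ∈ C) ∧ C.card = n} = Cmin.card := by
      apply le_antisymm
      · exact Nat.sInf_le ⟨Cmin, hcov, rfl⟩
      · refine le_csInf ⟨Cmin.card, ⟨Cmin, hcov, rfl⟩⟩ ?_
        rintro n ⟨C, hC, rfl⟩
        exact hmin C hC
    have herasecov : ∀ a b, (delVert G u).Adj a b → a ∈ Cmin.erase u ∨ b ∈ Cmin.erase u := by
      rintro a b ⟨hadj, ha, hb⟩
      rcases hcov a b hadj with h | h
      · exact Or.inl (Finset.mem_erase.2 ⟨ha, h⟩)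
      · exact Or.inr (Finset.mem_erase.2 ⟨hb, h⟩)
    have hAval : sInf {n | ∃ C : Finset V,
        (∀ a b, (delVert G u).Adj a b → a ∈ C ∨ b ∈ C) ∧ C.card = n} = Cmin.card - 1 := by
      apply le_antisymm
      · have := Nat.sInf_le (s := {n | ∃ C : Finset V,
          (∀ a b, (delVert G u).Adj a b → a ∈ C ∨ b ∈ C) ∧ C.card = n})
          ⟨Cmin.erase u, herasecov, rfl⟩
        rwa [Finset.card_erase_of_mem huC] at this
      · refine le_csInf ⟨(Cmin.erase u).card, ⟨Cmin.erase u, herasecov, rfl⟩⟩ ?_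
        rintro n ⟨C, hC, rfl⟩
        have hic : ∀ a b, G.Adj a b → a ∈ insert u C ∨ b ∈ insert u C := by
          intro a b hadj
          by_cases ha : a = u
          · exact Or.inl (ha ▸ Finset.mem_insert_self u C)
          · by_cases hb : b = u
            · exact Or.inr (hb ▸ Finset.mem_insert_self u C)
            · rcases hC a b ⟨hadj, ha, hb⟩ with h | h
              · exact Or.inl (Finset.mem_insert_of_mem h)
              · exact Or.inr (Finset.mem_insert_of_mem h)
        have h1 := hmin (insert u C) hic
        have h2 := Finset.card_insert_le u C
        omega
    rw [hAval, hBval]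
    have : 1 ≤ Cmin.card := Finset.card_pos.2 ⟨u, huC⟩
    omega
  · -- fractional part
    have hxsum : ∑ v, (if v = u then (0:ℚ) else 1/2) = (Fintype.card V : ℚ) / 2 - 1/2 := by
      have : ∑ v, (if v = u then (0:ℚ) else 1/2) =
          ∑ v, ((1:ℚ)/2 - (if v = u then 1/2 else 0)) := by
        apply Finset.sum_congr rfl
        intro v _
        by_cases h : v = u <;> simp [h]
      rw [this, Finset.sum_sub_distrib, Finset.sum_const, Finset.sum_ite_eq',
        if_pos (Finset.mem_univ u), Finset.card_univ, nsmul_eq_mul]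
      ring
    refine ⟨fun v => if v = u then 0 else 1/2, ⟨?_, ?_⟩, ?_, ?_⟩
    · intro v; by_cases h : v = u <;> simp [h] <;> norm_num
    · rintro a b ⟨_, ha, hb⟩
      simp only [if_neg ha, if_neg hb]
      norm_num
    · -- optimality
      rintro y ⟨hyb, hye⟩
      obtain ⟨z, hzspec, hzb, hze, hzsum⟩ :=
        round_lemma (delVert G u) (BadSet y).card y le_rfl hyb hye
      set z' : V → ℚ := Function.update z u 0 with hz'
      set w : V → ℚ := Function.update z u 1 with hw
      have hz'spec : ∀ v, z' v = 0 ∨ z' v = 1/2 ∨ z' v = 1 := by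
        intro v
        by_cases h : v = u
        · left; rw [hz', h, Function.update_self]
        · rw [hz', Function.update_of_ne h]; exact hzspec v
      have hwfeas : (∀ v, 0 ≤ w v ∧ w v ≤ 1) ∧ ∀ a b, G.Adj a b → 1 ≤ w a + w b := by
        constructor
        · intro v
          by_cases h : v = u
          · rw [hw, h, Function.update_self]; norm_num
          · rw [hw, Function.update_of_ne h]; exact hzb v
        · intro a b hadj
          by_cases ha : a = u
          · have hb : b ≠ u := by intro hbe; rw [hbe] at hadj; exact G.loopless.irrefl u (ha ▸ hadj)
            rw [hw, ha, Function.update_self, Function.update_of_ne hb]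
            linarith [(hzb b).1]
          · by_cases hb : b = u
            · rw [hw, hb, Function.update_self, Function.update_of_ne ha]
              linarith [(hzb a).1]
            · rw [hw, Function.update_of_ne ha, Function.update_of_ne hb]
              exact hze a b ⟨hadj, ha, hb⟩
      have hwne : w ≠ (fun _ => 1/2) := by
        intro h
        have := congrFun h u
        rw [hw, Function.update_self] at this
        norm_num at this
      have hkey := huniq w hwfeas hwne
      have hsumw : ∑ v, w v = 1 + ∑ v ∈ Finset.univ \ {u}, z v :=
        Finset.sum_update_of_mem (Finset.mem_univ u) z 1
      have hsumz' : ∑ v, z' v = 0 + ∑ v ∈ Finset.univ \ {u}, z v :=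
        Finset.sum_update_of_mem (Finset.mem_univ u) z 0
      have hsumz : ∑ v, z v = z u + ∑ v ∈ Finset.univ \ {u}, z v := by
        rw [← Finset.sum_update_of_mem (Finset.mem_univ u) z (z u)]
        congr 1
        ext v
        by_cases h : v = u
        · rw [h, Function.update_self]
        · rw [Function.update_of_ne h]
      -- half-integrality of ∑ z'
      set m : ℕ := ∑ v, (if z' v = 1 then 2 else if z' v = 1/2 then 1 else 0) with hm
      have hmval : ∑ v, z' v = (m : ℚ) / 2 := by
        rw [hm]
        push_cast
        rw [Finset.sum_div]
        apply Finset.sum_congr rfl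
        intro v _
        rcases hz'spec v with h | h | h <;> rw [h] <;> norm_num
      have hcd : (Fintype.card V : ℚ) / 2 < (m : ℚ) / 2 + 1 := by
        calc (Fintype.card V : ℚ) / 2 < ∑ v, w v := hkey
        _ = 1 + ∑ v ∈ Finset.univ \ {u}, z v := hsumw
        _ = (m : ℚ) / 2 + 1 := by rw [← hmval, hsumz']; ring
      have hnm : Fintype.card V < m + 2 := by
        have : (Fintype.card V : ℚ) < (m : ℚ) + 2 := by linarith
        exact_mod_cast this
      have hfinal : (Fintype.card V : ℚ) / 2 - 1/2 ≤ ∑ v, y v := by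
        have h1 : (Fintype.card V : ℚ) ≤ (m : ℚ) + 1 := by
          have : Fintype.card V ≤ m + 1 := by omega
          exact_mod_cast this
        have h2 : ∑ v, z' v ≤ ∑ v, z v := by
          rw [hsumz', hsumz]; linarith [(hzb u).1]
        linarith [hmval ▸ h2, hzsum]
      rw [hxsum]
      exact hfinal
    · -- sum value
      exact hxsum
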